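/- Let y ∈ ℝⁿ be an entrywise nonnegative vector. Then the Hadamard exponential exp_H(y yᵀ), with entries exp(y_i y_j), is completely positive: it equals the convergent series Σ_{k=0}^∞ (1/k!) (y yᵀ)^{∘k}, where each Hadamard power (y yᵀ)^{∘k} has entries (y_i y_j)^k and is a rank-one matrix w_k w_kᵀ with w_k entrywise nonnegative. -/

import Mathlib

open Matrix

private lemma vecMulVec_apply' {n : ℕ} (v w : Fin n → ℝ) (i j : Fin n) :
    vecMulVec v w i j = v i * w j := rfl

/-- One step of conical Carathéodory reduction: given a vanishing linear relation with a
positive maximal coefficient `μ a₀`, a finite sum of nonnegative rank-one matrices over `s`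
can be rewritten as such a sum over `s.erase a₀`. -/
private lemma cp_step {n : ℕ} (s : Finset ℕ) (v : ℕ → Fin n → ℝ)
    (hv : ∀ a ∈ s, ∀ i, 0 ≤ v a i)
    (μ : ℕ → ℝ) (hsum : ∑ a ∈ s, μ a • vecMulVec (v a) (v a) = 0)
    (a₀ : ℕ) (ha₀ : a₀ ∈ s) (hpos : 0 < μ a₀) (hmax : ∀ a ∈ s, μ a ≤ μ a₀) :
    ∃ v' : ℕ → Fin n → ℝ, (∀ a ∈ s.erase a₀, ∀ i, 0 ≤ v' a i) ∧
      ∑ a ∈ s.erase a₀, vecMulVec (v' a) (v' a) = ∑ a ∈ s, vecMulVec (v a) (v a) := by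
  set c : ℕ → ℝ := fun a => 1 - μ a / μ a₀ with hc
  have hcnonneg : ∀ a ∈ s, 0 ≤ c a := by
    intro a ha
    have : μ a / μ a₀ ≤ 1 := (div_le_one hpos).2 (hmax a ha)
    simp [hc]; linarith
  refine ⟨fun a => Real.sqrt (c a) • v a, ?_, ?_⟩
  · intro a ha i
    exact mul_nonneg (Real.sqrt_nonneg _) (hv a (Finset.mem_of_mem_erase ha) i)
  · have hterm : ∀ a ∈ s, vecMulVec (Real.sqrt (c a) • v a) (Real.sqrt (c a) • v a)
        = c a • vecMulVec (v a) (v a) := by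
      intro a ha
      ext i j
      have : Real.sqrt (c a) * Real.sqrt (c a) = c a := Real.mul_self_sqrt (hcnonneg a ha)
      simp only [vecMulVec_apply', Pi.smul_apply, smul_eq_mul, Matrix.smul_apply]
      calc Real.sqrt (c a) * v a i * (Real.sqrt (c a) * v a j)
          = (Real.sqrt (c a) * Real.sqrt (c a)) * (v a i * v a j) := by ring
        _ = c a * (v a i * v a j) := by rw [this]
    have hzero : vecMulVec (Real.sqrt (c a₀) • v a₀) (Real.sqrt (c a₀) • v a₀)
        = (0 : Matrix (Fin n) (Fin n) ℝ) := by
      have hca₀ : c a₀ = 0 := by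
        simp [hc, div_self (ne_of_gt hpos)]
      ext i j
      simp [vecMulVec_apply', hca₀, Real.sqrt_zero]
    rw [Finset.sum_erase s hzero]
    calc ∑ a ∈ s, vecMulVec (Real.sqrt (c a) • v a) (Real.sqrt (c a) • v a)
        = ∑ a ∈ s, c a • vecMulVec (v a) (v a) := Finset.sum_congr rfl hterm
      _ = ∑ a ∈ s, (vecMulVec (v a) (v a) - (μ a₀)⁻¹ • (μ a • vecMulVec (v a) (v a))) := by
          refine Finset.sum_congr rfl fun a _ => ?_
          rw [smul_smul, sub_smul, one_smul]
          congr 2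
          field_simp
      _ = ∑ a ∈ s, vecMulVec (v a) (v a)
            - (μ a₀)⁻¹ • ∑ a ∈ s, μ a • vecMulVec (v a) (v a) := by
          rw [Finset.sum_sub_distrib, Finset.smul_sum]
      _ = ∑ a ∈ s, vecMulVec (v a) (v a) := by rw [hsum, smul_zero, sub_zero]

/-- Conical Carathéodory: every finite sum of nonnegative rank-one matrices is a sum of
exactly `n * n` nonnegative rank-one matrices. -/
private lemma cp_reduce {n : ℕ} (s : Finset ℕ) (v : ℕ → Fin n → ℝ)
    (hv : ∀ a ∈ s, ∀ i, 0 ≤ v a i) :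
    ∃ w : Fin (n * n) → Fin n → ℝ, (∀ a i, 0 ≤ w a i) ∧
      ∑ a ∈ s, vecMulVec (v a) (v a) = ∑ a, vecMulVec (w a) (w a) := by
  induction s using Finset.strongInduction generalizing v with
  | _ s ih =>
  by_cases hcard : s.card ≤ n * n
  · -- pad with zero vectors
    set e := s.orderIsoOfFin rfl with he
    set wN : ℕ → Fin n → ℝ :=
      fun k => if h : k < s.card then v (e ⟨k, h⟩) else 0 with hwN
    refine ⟨fun a => wN a, ?_, ?_⟩
    · intro a i
      by_cases h : (a : ℕ) < s.card
      · simpa [hwN, h] using hv (e ⟨a, h⟩) (e ⟨a, h⟩).2 i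
      · simp [hwN, h]
    · have h1 : ∀ k : ℕ, ¬ k < s.card →
          vecMulVec (wN k) (wN k) = (0 : Matrix (Fin n) (Fin n) ℝ) := by
        intro k hk
        ext i j
        simp [hwN, hk, vecMulVec_apply']
      calc ∑ a ∈ s, vecMulVec (v a) (v a)
          = ∑ a : {x // x ∈ s}, vecMulVec (v a) (v a) := (Finset.sum_coe_sort s _).symm
        _ = ∑ k : Fin s.card, vecMulVec (v (e k)) (v (e k)) :=
            (Fintype.sum_equiv e.toEquiv _ _ fun k => rfl).symm
        _ = ∑ k : Fin s.card, vecMulVec (wN k) (wN k) := by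
            refine Finset.sum_congr rfl fun k _ => ?_
            simp [hwN, k.isLt]
        _ = ∑ k ∈ Finset.range s.card, vecMulVec (wN k) (wN k) :=
            Fin.sum_univ_eq_sum_range (fun k => vecMulVec (wN k) (wN k)) s.card
        _ = ∑ k ∈ Finset.range (n * n), vecMulVec (wN k) (wN k) := by
            refine Finset.sum_subset (Finset.range_subset_range.2 hcard) ?_
            intro x _ hx
            exact h1 x (by simpa using hx)
        _ = ∑ a : Fin (n * n), vecMulVec (wN a) (wN a) :=
            (Fin.sum_univ_eq_sum_range (fun k => vecMulVec (wN k) (wN k)) (n * n)).symm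
  · -- too many terms: find a relation and reduce
    push_neg at hcard
    have hnotli : ¬ LinearIndependent ℝ
        (fun a : {x // x ∈ s} => vecMulVec (v a) (v a)) := by
      intro hli
      have h1 := hli.fintype_card_le_finrank
      have h2 : Module.finrank ℝ (Matrix (Fin n) (Fin n) ℝ) = n * n := by
        simp [Module.finrank_matrix]
      rw [Fintype.card_coe, h2] at h1
      omega
    obtain ⟨g, hg0, b, hb⟩ := Fintype.not_linearIndependent_iff.1 hnotli
    classical
    set μ : ℕ → ℝ := fun k => if h : k ∈ s then g ⟨k, h⟩ else 0 with hμ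
    have hμsum : ∑ a ∈ s, μ a • vecMulVec (v a) (v a) = 0 := by
      rw [← Finset.sum_coe_sort s (fun a => μ a • vecMulVec (v a) (v a))]
      rw [← hg0]
      refine Finset.sum_congr rfl fun a _ => ?_
      simp [hμ, a.2]
    have hμb : μ (b : ℕ) ≠ 0 := by simpa [hμ, b.2] using hb
    have key : ∀ μ' : ℕ → ℝ, (∑ a ∈ s, μ' a • vecMulVec (v a) (v a) = 0) →
        (∃ a ∈ s, 0 < μ' a) →
        ∃ w : Fin (n * n) → Fin n → ℝ, (∀ a i, 0 ≤ w a i) ∧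
          ∑ a ∈ s, vecMulVec (v a) (v a) = ∑ a, vecMulVec (w a) (w a) := by
      intro μ' hsum' ⟨a₁, ha₁, ha₁pos⟩
      obtain ⟨a₀, ha₀, hmax⟩ := Finset.exists_max_image s μ' ⟨a₁, ha₁⟩
      have hpos : 0 < μ' a₀ := lt_of_lt_of_le ha₁pos (hmax a₁ ha₁)
      obtain ⟨v', hv', heq⟩ := cp_step s v hv μ' hsum' a₀ ha₀ hpos hmax
      obtain ⟨w, hw, hweq⟩ := ih (s.erase a₀) (Finset.erase_ssubset ha₀) v' hv'
      exact ⟨w, hw, by rw [← heq, hweq]⟩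
    rcases lt_or_gt_of_ne hμb with hneg | hposb
    · refine key (fun a => - μ a) ?_ ⟨b, b.2, by simpa using hneg⟩
      simp only [neg_smul, Finset.sum_neg_distrib]
      rw [hμsum, neg_zero]
    · exact key μ hμsum ⟨b, b.2, hposb⟩

/-- For a nonnegative vector `y`, the Hadamard exponential `exp_H(y yᵀ)` equals the
convergent series `∑ₖ (1/k!) (y yᵀ)^{∘k}`, each Hadamard power `(y yᵀ)^{∘k}` is the
rank-one matrix `wₖ wₖᵀ` with `wₖ = (yᵢᵏ)ᵢ` nonnegative, and `exp_H(y yᵀ)` is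
completely positive. -/
theorem hadamard_exp_nonneg_vec_completelyPositive (n : ℕ) (y : Fin n → ℝ)
    (hy : ∀ i, 0 ≤ y i) :
    (∀ i j, HasSum (fun k : ℕ => ((Nat.factorial k : ℝ))⁻¹ * (y i * y j) ^ k)
      (Real.exp (y i * y j))) ∧
    (∀ k : ℕ, Matrix.of (fun i j : Fin n => (y i * y j) ^ k) =
        Matrix.vecMulVec (fun i => y i ^ k) (fun i => y i ^ k) ∧
      ∀ i, 0 ≤ y i ^ k) ∧
    ∃ (m : ℕ) (U : Matrix (Fin n) (Fin m) ℝ),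
      (∀ i j, 0 ≤ U i j) ∧
      Matrix.of (fun i j => Real.exp (y i * y j)) = U * Uᵀ := by
  have hexp : ∀ x : ℝ, HasSum (fun k : ℕ => ((Nat.factorial k : ℝ))⁻¹ * x ^ k)
      (Real.exp x) := by
    intro x
    have h := NormedSpace.expSeries_div_hasSum_exp x
    rw [← Real.exp_eq_exp_ℝ] at h
    simpa [div_eq_inv_mul] using h
  refine ⟨fun i j => hexp _, ?_, ?_⟩
  · intro k
    constructor
    · ext i j
      simp [vecMulVec_apply', mul_pow]
    · exact fun i => pow_nonneg (hy i) k
  · -- complete positivity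
    set d := n * n with hd
    -- the rank-one vectors in the series
    set v : ℕ → Fin n → ℝ :=
      fun k => fun i => Real.sqrt ((Nat.factorial k : ℝ))⁻¹ * y i ^ k with hv
    have hvnonneg : ∀ k i, 0 ≤ v k i :=
      fun k i => mul_nonneg (Real.sqrt_nonneg _) (pow_nonneg (hy i) k)
    have hventry : ∀ k i j, v k i * v k j = ((Nat.factorial k : ℝ))⁻¹ * (y i * y j) ^ k := by
      intro k i j
      have hs : Real.sqrt ((Nat.factorial k : ℝ))⁻¹ * Real.sqrt ((Nat.factorial k : ℝ))⁻¹
          = ((Nat.factorial k : ℝ))⁻¹ :=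
        Real.mul_self_sqrt (by positivity)
      calc v k i * v k j
          = (Real.sqrt ((Nat.factorial k : ℝ))⁻¹ * Real.sqrt ((Nat.factorial k : ℝ))⁻¹)
              * (y i ^ k * y j ^ k) := by simp only [hv]; ring
        _ = ((Nat.factorial k : ℝ))⁻¹ * (y i * y j) ^ k := by rw [hs, mul_pow]
    -- representation of partial sums with exactly d rank-one terms
    have hrep : ∀ t : ℕ, ∃ w : Fin d → Fin n → ℝ, (∀ a i, 0 ≤ w a i) ∧
        ∀ i j, ∑ k ∈ Finset.range t, ((Nat.factorial k : ℝ))⁻¹ * (y i * y j) ^ k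
          = ∑ a, w a i * w a j := by
      intro t
      obtain ⟨w, hw, hweq⟩ := cp_reduce (Finset.range t) v (fun a _ i => hvnonneg a i)
      refine ⟨w, hw, fun i j => ?_⟩
      have h1 := congrFun (congrFun hweq i) j
      simp only [Matrix.sum_apply] at h1
      calc ∑ k ∈ Finset.range t, ((Nat.factorial k : ℝ))⁻¹ * (y i * y j) ^ k
          = ∑ k ∈ Finset.range t, vecMulVec (v k) (v k) i j := by
            refine Finset.sum_congr rfl fun k _ => ?_
            rw [vecMulVec_apply', hventry]
        _ = ∑ a, vecMulVec (w a) (w a) i j := h1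
        _ = ∑ a, w a i * w a j := rfl
    choose w hwnn hweq using hrep
    -- uniform bound on the entries of the representations
    have hbound : ∀ t a i, w t a i ∈ Set.Icc (0 : ℝ) (Real.sqrt (Real.exp (y i * y i))) := by
      intro t a i
      refine ⟨hwnn t a i, ?_⟩
      have h1 : (w t a i) ^ 2 ≤ ∑ b, w t b i * w t b i := by
        rw [sq]
        simpa using Finset.single_le_sum (f := fun b => w t b i * w t b i)
          (fun b _ => mul_self_nonneg _) (Finset.mem_univ a)
      have h2 : ∑ b, w t b i * w t b i ≤ Real.exp (y i * y i) := by
        rw [← hweq t i i]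
        exact sum_le_hasSum _
          (fun k _ => mul_nonneg (by positivity)
            (pow_nonneg (mul_nonneg (hy i) (hy i)) k)) (hexp (y i * y i))
      exact (Real.le_sqrt (hwnn t a i) (Real.exp_nonneg _)).2 (le_trans h1 h2)
    -- compactness: extract a convergent subsequence of representations
    set K : Set (Fin d → Fin n → ℝ) :=
      Set.univ.pi fun _ => Set.univ.pi fun i =>
        Set.Icc (0 : ℝ) (Real.sqrt (Real.exp (y i * y i))) with hK
    have hKcompact : IsCompact K :=
      isCompact_univ_pi fun _ => isCompact_univ_pi fun _ => isCompact_Icc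
    have hmem : ∀ t, w t ∈ K := by
      intro t
      simp only [hK, Set.mem_pi, Set.mem_univ, forall_true_left]
      exact fun a i => hbound t a i
    obtain ⟨W, hWK, φ, hφ, hconv⟩ := hKcompact.tendsto_subseq hmem
    have hWnn : ∀ a i, 0 ≤ W a i := by
      intro a i
      have := hWK
      simp only [hK, Set.mem_pi, Set.mem_univ, forall_true_left] at this
      exact (this a i).1
    refine ⟨d, Matrix.of (fun i a => W a i), fun i a => hWnn a i, ?_⟩
    ext i j
    show Real.exp (y i * y j) = ∑ a, W a i * W a j
    -- coordinatewise convergence of the subsequence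
    have hcoord : ∀ a, Filter.Tendsto (fun t => w (φ t) a)
        Filter.atTop (nhds (W a)) := fun a => (tendsto_pi_nhds.1 hconv) a
    have hcoord2 : ∀ a i', Filter.Tendsto (fun t => w (φ t) a i')
        Filter.atTop (nhds (W a i')) := fun a i' => (tendsto_pi_nhds.1 (hcoord a)) i'
    have hlim1 : Filter.Tendsto
        (fun t => ∑ k ∈ Finset.range (φ t), ((Nat.factorial k : ℝ))⁻¹ * (y i * y j) ^ k)
        Filter.atTop (nhds (Real.exp (y i * y j))) :=
      ((hexp (y i * y j)).tendsto_sum_nat).comp hφ.tendsto_atTop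
    have hlim2 : Filter.Tendsto
        (fun t => ∑ k ∈ Finset.range (φ t), ((Nat.factorial k : ℝ))⁻¹ * (y i * y j) ^ k)
        Filter.atTop (nhds (∑ a, W a i * W a j)) := by
      have : (fun t => ∑ k ∈ Finset.range (φ t),
          ((Nat.factorial k : ℝ))⁻¹ * (y i * y j) ^ k)
          = fun t => ∑ a, w (φ t) a i * w (φ t) a j := by
        funext t
        exact hweq (φ t) i j
      rw [this]
      exact tendsto_finset_sum _ fun a _ => (hcoord2 a i).mul (hcoord2 a j)
    exact tendsto_nhds_unique hlim1 hlim2
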